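/- For the weight function w(i,j) = j/i, every decreasing integer jumping pattern from n to 1 with k jumps has total weight at least k·n^{1/k}, and k·n^{1/k} ≥ e·ln(n) for all k ≥ 1 and n ≥ 1; hence the minimal cost b(n) ≥ e·ln(n). -/
import Mathlib


/-- Minimal cost `b(n)` of a jumping pattern from `n` down to `1`:
`b(1)=0` and `b(n) = min_{1 <= k < n} (w(k,n) + b(k))`. -/
noncomputable def minCost (w : ℕ → ℕ → ℝ) : ℕ → ℝ
  | 0 => 0
  | 1 => 0
  | (n+2) =>
    ((Finset.Icc 1 (n+1)).attach).inf'
      ⟨⟨1, by simp⟩, Finset.mem_attach _ _⟩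
      (fun k => w k.1 (n+2) + minCost w k.1)
decreasing_by
  have := Finset.mem_Icc.mp k.2; omega

/-- The lexicographically-first cost-minimizing jump sequence. -/
noncomputable def jumpSeq (w : ℕ → ℕ → ℝ) : ℕ → ℕ := fun n =>
  if n ≤ 1 then 1
  else sInf {k | 1 ≤ k ∧ k < n ∧ w k n + minCost w k = minCost w n}


lemma aux_exp_mul (t : ℝ) : Real.exp 1 * t ≤ Real.exp t := by
  have h := Real.add_one_le_exp (t - 1)
  have h2 : Real.exp (t - 1) = Real.exp t / Real.exp 1 := by
    rw [Real.exp_sub]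
  rw [h2, le_div_iff₀ (Real.exp_pos 1)] at h
  nlinarith [h]

lemma aux_log_le (r : ℝ) (hr : 1 ≤ r) : Real.exp 1 * Real.log r ≤ r := by
  have := aux_exp_mul (Real.log r)
  rwa [Real.exp_log (by linarith)] at this

lemma aux_prod_div (b : ℕ → ℕ) (k : ℕ) (h : ∀ i ≤ k, 1 ≤ b i) :
    ∏ i ∈ Finset.range k, ((b i : ℝ) / (b (i+1) : ℝ)) = (b 0 : ℝ) / (b k : ℝ) := by
  induction k with
  | zero =>
    have h0 : (0:ℝ) < b 0 := by exact_mod_cast h 0 le_rfl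
    rw [Finset.prod_range_zero, div_self h0.ne']
  | succ k ih =>
    rw [Finset.prod_range_succ, ih (fun i hi => h i (by omega))]
    have hk : (0:ℝ) < b k := by exact_mod_cast h k (by omega)
    field_simp

lemma aux_part1 (n k : ℕ) (hk : 1 ≤ k) (b : ℕ → ℕ) (h0 : b 0 = n) (hk1 : b k = 1)
    (hpos : ∀ i ≤ k, 1 ≤ b i) :
    (k : ℝ) * (n : ℝ) ^ ((1 : ℝ) / k) ≤
      ∑ i ∈ Finset.range k, (b i : ℝ) / (b (i+1) : ℝ) := by
  have hk0 : (0:ℝ) < k := by exact_mod_cast hk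
  have hz : ∀ i ∈ Finset.range k, (0:ℝ) ≤ (b i : ℝ) / (b (i+1) : ℝ) := by
    intro i _; positivity
  have hsum : ∑ _i ∈ Finset.range k, (1:ℝ)/k = 1 := by
    rw [Finset.sum_const, Finset.card_range, nsmul_eq_mul]
    field_simp
  have hgm := Real.geom_mean_le_arith_mean_weighted (Finset.range k)
    (fun _ => (1:ℝ)/k) (fun i => (b i : ℝ) / (b (i+1) : ℝ))
    (fun i _ => by positivity) hsum hz
  have hprod : ∏ i ∈ Finset.range k, ((b i : ℝ) / (b (i+1) : ℝ)) ^ ((1:ℝ)/k)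
      = (n : ℝ) ^ ((1:ℝ)/k) := by
    rw [Real.finset_prod_rpow _ _ hz, aux_prod_div b k hpos, h0, hk1]
    norm_num
  rw [hprod] at hgm
  have : ∑ i ∈ Finset.range k, (1:ℝ)/k * ((b i : ℝ) / (b (i+1) : ℝ))
      = (1/k) * ∑ i ∈ Finset.range k, (b i : ℝ) / (b (i+1) : ℝ) := by
    rw [Finset.mul_sum]
  rw [this] at hgm
  rw [← le_div_iff₀' hk0]
  calc (n : ℝ) ^ ((1:ℝ)/k) ≤ _ := hgm
    _ = _ := by field_simp

lemma aux_part2 (n k : ℕ) (hn : 1 ≤ n) (hk : 1 ≤ k) :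
    Real.exp 1 * Real.log n ≤ (k : ℝ) * (n : ℝ) ^ ((1 : ℝ) / k) := by
  have hk0 : (0:ℝ) < k := by exact_mod_cast hk
  have hn0 : (0:ℝ) < n := by exact_mod_cast hn
  rw [Real.rpow_def_of_pos hn0]
  have h := aux_exp_mul (Real.log n * (1/k))
  have h2 : (k:ℝ) * (Real.exp 1 * (Real.log n * (1/k))) = Real.exp 1 * Real.log n := by
    field_simp
  nlinarith [h, hk0]

lemma aux_part3 (w : ℕ → ℕ → ℝ) (hw : ∀ i j : ℕ, w i j = (j : ℝ) / (i : ℝ)) :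
    ∀ n : ℕ, 1 ≤ n → Real.exp 1 * Real.log n ≤ minCost w n := by
  intro n
  induction n using Nat.strong_induction_on with
  | _ n ih =>
    intro hn
    match n, hn with
    | 1, _ => simp [minCost]
    | (m+2), _ =>
      rw [minCost]
      apply Finset.le_inf'
      rintro ⟨k, hkmem⟩ _
      obtain ⟨h1, h2⟩ := Finset.mem_Icc.mp hkmem
      have IH : Real.exp 1 * Real.log k ≤ minCost w k := ih k (by omega) h1
      have hk0 : (0:ℝ) < k := by exact_mod_cast h1
      have hm2 : (0:ℝ) < ((m:ℝ)+2) := by positivity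
      have hge : (1:ℝ) ≤ ((m:ℝ)+2) / k := by
        rw [le_div_iff₀ hk0]
        have : (k:ℝ) ≤ (m:ℝ)+1 := by exact_mod_cast h2
        linarith
      have key := aux_log_le (((m:ℝ)+2)/k) hge
      rw [Real.log_div hm2.ne' hk0.ne', mul_sub] at key
      simp only [hw]
      push_cast
      linarith

theorem stmt_17 (w : ℕ → ℕ → ℝ) (hw : ∀ i j : ℕ, w i j = (j : ℝ) / (i : ℝ))
    (n : ℕ) (hn : 1 ≤ n) :
    (∀ k : ℕ, 1 ≤ k → ∀ b : ℕ → ℕ, b 0 = n → b k = 1 →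
      (∀ i < k, b (i+1) < b i) → (∀ i ≤ k, 1 ≤ b i) →
        (k : ℝ) * (n : ℝ) ^ ((1 : ℝ) / k) ≤
          ∑ i ∈ Finset.range k, (b i : ℝ) / (b (i+1) : ℝ)) ∧
    (∀ k : ℕ, 1 ≤ k → Real.exp 1 * Real.log n ≤ (k : ℝ) * (n : ℝ) ^ ((1 : ℝ) / k)) ∧
    Real.exp 1 * Real.log n ≤ minCost w n := by
  refine ⟨fun k hk b h0 hk1 _ hpos => aux_part1 n k hk b h0 hk1 hpos,
    fun k hk => aux_part2 n k hn hk, aux_part3 w hw n hn⟩
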